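/- Let n be a positive integer and p an odd prime. A connected circulant graph Cay(Z_n, S) of degree p − 1 (i.e., |S| = p − 1) admits a perfect code if and only if p divides n and s ≢ s′ (mod p) for all distinct s, s′ ∈ S ∪ {0}. -/

import Mathlib

open Polynomial

/-- The circulant graph `Cay(Z_n, S)`: vertices are `ZMod n`, and `u, v` are adjacent
iff `v - u ∈ S` (here symmetrised; when `S = -S` this agrees with the usual definition). -/
def circulantGraph (n : ℕ) (S : Finset (ZMod n)) : SimpleGraph (ZMod n) :=
  SimpleGraph.fromRel (fun u v => v - u ∈ S)

/-- `C` is a perfect code in `G`: an independent set such that every vertex outside `C`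
is adjacent to exactly one vertex of `C`. -/
def IsPerfectCode {V : Type*} (G : SimpleGraph V) (C : Set V) : Prop :=
  (∀ u ∈ C, ∀ v ∈ C, ¬ G.Adj u v) ∧ ∀ v, v ∉ C → ∃! c, c ∈ C ∧ G.Adj v c

/-- `C` is a total perfect code in `G`: every vertex is adjacent to exactly one vertex of `C`. -/
def IsTotalPerfectCode {V : Type*} (G : SimpleGraph V) (C : Set V) : Prop :=
  ∀ v, ∃! c, c ∈ C ∧ G.Adj v c

namespace CircPC

lemma pow_val_mod {K : Type*} [Monoid K] (ζ : K) {m : ℕ} (hζ : ζ ^ m = 1) (t : ℕ) :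
    ζ ^ t = ζ ^ (t % m) := by
  conv_lhs => rw [← Nat.div_add_mod t m]
  rw [pow_add, pow_mul, hζ, one_pow, one_mul]

noncomputable def countPoly {n : ℕ} (A : Finset (ZMod n)) (m : ℕ) : Polynomial ℤ :=
  ∑ a ∈ A, (X : ℤ[X]) ^ (a.val % m)

lemma countPoly_coeff {n : ℕ} (A : Finset (ZMod n)) (m i : ℕ) :
    (countPoly A m).coeff i = ((A.filter (fun a => a.val % m = i)).card : ℤ) := by
  classical
  rw [countPoly, finset_sum_coeff, Finset.card_filter]
  push_cast
  refine Finset.sum_congr rfl fun a _ => ?_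
  rw [coeff_X_pow]
  simp [eq_comm]

lemma countPoly_coeff_nonneg {n : ℕ} (A : Finset (ZMod n)) (m i : ℕ) :
    0 ≤ (countPoly A m).coeff i := by
  rw [countPoly_coeff]; positivity

lemma countPoly_eval_one {n : ℕ} (A : Finset (ZMod n)) (m : ℕ) :
    (countPoly A m).eval 1 = A.card := by
  simp [countPoly, eval_finset_sum]

lemma countPoly_degree_lt {n : ℕ} (A : Finset (ZMod n)) {m : ℕ} (hm : 0 < m) :
    (countPoly A m).degree < (m : ℕ) := by
  refine lt_of_le_of_lt (degree_sum_le _ _) ?_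
  rw [Finset.sup_lt_iff (by exact_mod_cast WithBot.bot_lt_coe m)]
  intro a _
  rw [degree_X_pow]
  exact_mod_cast Nat.mod_lt _ hm

lemma countPoly_aeval {n : ℕ} {K : Type*} [CommRing K] (ζ : K) {m : ℕ} (hζ : ζ ^ m = 1)
    (A : Finset (ZMod n)) :
    (aeval ζ) (countPoly A m) = ∑ a ∈ A, ζ ^ a.val := by
  rw [countPoly, map_sum]
  exact Finset.sum_congr rfl fun a _ => by
    rw [map_pow, aeval_X]; exact (pow_val_mod ζ hζ _).symm

lemma sum_pow_val_eq_zero {K : Type*} [Field K] {n : ℕ} [NeZero n] (hn : 1 < n) (ζ : K)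
    (hζn : ζ ^ n = 1) (hζ1 : ζ ≠ 1) :
    ∑ v : ZMod n, ζ ^ v.val = 0 := by
  haveI : Fact (1 < n) := ⟨hn⟩
  have key : (∑ v : ZMod n, ζ ^ v.val) * ζ = ∑ v : ZMod n, ζ ^ v.val := by
    rw [Finset.sum_mul]
    refine Fintype.sum_bijective (· + (1 : ZMod n)) (Equiv.addRight (1 : ZMod n)).bijective _ _
      fun v => ?_
    rw [ZMod.val_add, ← pow_val_mod ζ hζn, ZMod.val_one, pow_succ]
  have h2 : (∑ v : ZMod n, ζ ^ v.val) * (ζ - 1) = 0 := by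
    rw [mul_sub, key, mul_one, sub_self]
  exact (mul_eq_zero.mp h2).resolve_right (sub_ne_zero.mpr hζ1)

lemma eq_cyclotomic_of_dvd (p : ℕ) (hp : p.Prime) (s : ℕ) (f : ℤ[X])
    (hpos : ∀ i, 0 ≤ f.coeff i) (hdeg : f.degree < ((p ^ (s + 1) : ℕ) : WithBot ℕ))
    (h1 : f.eval 1 = p) (hc0 : 1 ≤ f.coeff 0)
    (hdvd : cyclotomic (p ^ (s + 1)) ℤ ∣ f) : f = cyclotomic (p ^ (s + 1)) ℤ := by
  haveI : Fact p.Prime := ⟨hp⟩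
  obtain ⟨q, hq⟩ := hdvd
  have hf0 : f ≠ 0 := by
    intro h; rw [h, eval_zero] at h1
    exact hp.ne_zero (by exact_mod_cast h1.symm)
  have hΦ0 : cyclotomic (p ^ (s + 1)) ℤ ≠ 0 := (cyclotomic.monic _ ℤ).ne_zero
  have hq0 : q ≠ 0 := by rintro rfl; rw [mul_zero] at hq; exact hf0 hq
  have hps : 0 < p ^ s := pow_pos hp.pos s
  have hndΦ : (cyclotomic (p ^ (s + 1)) ℤ).natDegree = p ^ s * (p - 1) := by
    rw [natDegree_cyclotomic, Nat.totient_prime_pow hp (Nat.succ_pos s)]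
    norm_num
  have hndf : f.natDegree < p ^ (s + 1) := by
    rwa [← natDegree_lt_iff_degree_lt hf0] at hdeg
  have hndmul : f.natDegree = (cyclotomic (p ^ (s + 1)) ℤ).natDegree + q.natDegree := by
    rw [hq, natDegree_mul hΦ0 hq0]
  have hexp : p ^ s * (p - 1) + p ^ s = p ^ (s + 1) := by
    rw [← Nat.mul_succ]
    have h2 : (p - 1).succ = p := by have := hp.one_le; omega
    rw [h2, pow_succ]
  have hndq : q.natDegree < p ^ s := by omega
  have hΦ : cyclotomic (p ^ (s + 1)) ℤ = ∑ t ∈ Finset.range p, (X : ℤ[X]) ^ (p ^ s * t) := by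
    rw [cyclotomic_prime_pow_eq_geom_sum hp]
    exact Finset.sum_congr rfl fun t _ => by rw [← pow_mul]
  have hfq : f = ∑ t ∈ Finset.range p, q * (X : ℤ[X]) ^ (p ^ s * t) := by
    rw [hq, hΦ, Finset.sum_mul]
    exact Finset.sum_congr rfl fun t _ => mul_comm _ _
  have hcoeff : ∀ i : ℕ, i < p ^ s → f.coeff i = q.coeff i := by
    intro i hi
    rw [hfq, finset_sum_coeff]
    rw [Finset.sum_eq_single_of_mem 0 (Finset.mem_range.mpr hp.pos)]
    · simp
    · intro t ht hne
      rw [coeff_mul_X_pow']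
      have : ¬ p ^ s * t ≤ i := by
        have : p ^ s ≤ p ^ s * t := Nat.le_mul_of_pos_right _ (Nat.pos_of_ne_zero hne)
        omega
      simp [this]
  -- q has nonneg coefficients
  have hqpos : ∀ i, 0 ≤ q.coeff i := by
    intro i
    rcases lt_or_ge i (p ^ s) with h | h
    · rw [← hcoeff i h]; exact hpos i
    · rw [coeff_eq_zero_of_natDegree_lt (lt_of_lt_of_le hndq h)]
  have hqc0 : 1 ≤ q.coeff 0 := by rw [← hcoeff 0 hps]; exact hc0
  -- q.eval 1 = 1
  have hq1 : q.eval 1 = 1 := by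
    have := h1
    rw [hq, eval_mul, eval_one_cyclotomic_prime_pow] at this
    have hpz : (p : ℤ) ≠ 0 := by exact_mod_cast hp.ne_zero
    have := mul_left_cancel₀ hpz (this.trans (mul_one _).symm)
    linarith [this]
  -- sum of coefficients of q equals 1
  have hsum : ∑ i ∈ Finset.range (q.natDegree + 1), q.coeff i = 1 := by
    have := eval_eq_sum_range (1 : ℤ) (p := q)
    simpa [hq1] using this.symm
  have h0mem : (0 : ℕ) ∈ Finset.range (q.natDegree + 1) := Finset.mem_range.mpr (Nat.succ_pos _)
  have hle : q.coeff 0 ≤ 1 := by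
    rw [← hsum]
    exact Finset.single_le_sum (fun i _ => hqpos i) h0mem
  have hq00 : q.coeff 0 = 1 := le_antisymm hle hqc0
  have hrest : ∀ i ∈ (Finset.range (q.natDegree + 1)).erase 0, q.coeff i = 0 := by
    have hsplit : q.coeff 0 + ∑ i ∈ (Finset.range (q.natDegree + 1)).erase 0, q.coeff i = 1 := by
      rw [Finset.add_sum_erase _ _ h0mem]; exact hsum
    rw [hq00] at hsplit
    have : ∑ i ∈ (Finset.range (q.natDegree + 1)).erase 0, q.coeff i = 0 := by linarith
    intro i hi
    exact (Finset.sum_eq_zero_iff_of_nonneg (fun j _ => hqpos j)).mp this i hi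
  have hqone : q = 1 := by
    ext i
    rcases Nat.eq_zero_or_pos i with rfl | hi
    · simpa using hq00
    · rcases le_or_gt i q.natDegree with h | h
      · have : q.coeff i = 0 := hrest i (by
          rw [Finset.mem_erase]; exact ⟨hi.ne', Finset.mem_range.mpr (by omega)⟩)
        simp [this, coeff_one, hi.ne']
      · rw [coeff_eq_zero_of_natDegree_lt h]
        simp [coeff_one, hi.ne']
  rw [hq, hqone, mul_one]

lemma cyclotomic_prime_pow_coeff (p : ℕ) (hp : p.Prime) (s i : ℕ) :
    (cyclotomic (p ^ (s + 1)) ℤ).coeff i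
      = if p ^ s ∣ i ∧ i < p ^ (s + 1) then 1 else 0 := by
  have hps : 0 < p ^ s := pow_pos hp.pos s
  have hΦ : cyclotomic (p ^ (s + 1)) ℤ = ∑ t ∈ Finset.range p, (X : ℤ[X]) ^ (p ^ s * t) := by
    rw [cyclotomic_prime_pow_eq_geom_sum hp]
    exact Finset.sum_congr rfl fun t _ => by rw [← pow_mul]
  rw [hΦ, finset_sum_coeff]
  simp only [coeff_X_pow]
  by_cases h : p ^ s ∣ i ∧ i < p ^ (s + 1)
  · obtain ⟨⟨t0, ht0⟩, hlt⟩ := h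
    have ht0p : t0 < p := by
      by_contra hc
      push_neg at hc
      have : p ^ s * p ≤ p ^ s * t0 := Nat.mul_le_mul_left _ hc
      rw [pow_succ] at hlt; omega
    rw [Finset.sum_eq_single_of_mem t0 (Finset.mem_range.mpr ht0p)]
    · rw [if_pos ht0, if_pos ⟨⟨t0, ht0⟩, hlt⟩]
    · intro t ht hne
      have : i ≠ p ^ s * t := by
        rw [ht0]; intro hc
        exact hne (Nat.eq_of_mul_eq_mul_left hps hc).symm
      simp [this]
  · rw [if_neg h]
    refine Finset.sum_eq_zero fun t ht => ?_
    have : i ≠ p ^ s * t := by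
      intro hc
      refine h ⟨⟨t, hc⟩, ?_⟩
      rw [hc, pow_succ]
      exact (Nat.mul_lt_mul_left hps).mpr (Finset.mem_range.mp ht)
    simp [this]

lemma cyclotomic_dvd_of_aeval_zero {K : Type*} [Field K] [CharZero K] {m : ℕ} (hm : 0 < m)
    {ζ : K} (hζ : IsPrimitiveRoot ζ m) {f : ℤ[X]} (hf : (aeval ζ) f = 0) :
    cyclotomic m ℤ ∣ f := by
  have h2 : (aeval ζ) (f.map (algebraMap ℤ ℚ)) = 0 := by rwa [aeval_map_algebraMap]
  have h3 := minpoly.dvd ℚ ζ h2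
  rw [← cyclotomic_eq_minpoly_rat hζ hm, ← map_cyclotomic_int, ← algebraMap_int_eq] at h3
  exact (map_dvd_map (algebraMap ℤ ℚ) (fun a b h => by exact_mod_cast h)
    (cyclotomic.monic _ ℤ)).mp h3

lemma dichotomy {n p : ℕ} [NeZero n] (hn : 1 < n) (hp : p.Prime) {j : ℕ} (hj : 1 ≤ j)
    (hmn : p ^ j ∣ n) (Cf D : Finset (ZMod n))
    (htile : ∀ v : ZMod n, ∃! x : ZMod n × ZMod n, x.1 ∈ Cf ∧ x.2 ∈ D ∧ x.1 + x.2 = v) :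
    cyclotomic (p ^ j) ℤ ∣ countPoly Cf (p ^ j) ∨ cyclotomic (p ^ j) ℤ ∣ countPoly D (p ^ j) := by
  set m : ℕ := p ^ j with hmdef
  have hm1 : 1 < m := Nat.one_lt_pow (by omega) hp.one_lt
  have hm0 : 0 < m := by omega
  let mp : ℕ+ := ⟨m, hm0⟩
  haveI : NeZero m := ⟨hm0.ne'⟩
  let K := CyclotomicField m ℚ
  haveI : IsCyclotomicExtension {m} ℚ K :=
    haveI : NeZero (m : ℚ) := ⟨by exact_mod_cast hm0.ne'⟩
    CyclotomicField.isCyclotomicExtension (n := m) (K := ℚ)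
  let ζ : K := IsCyclotomicExtension.zeta m ℚ K
  have hζ : IsPrimitiveRoot ζ m := IsCyclotomicExtension.zeta_spec m ℚ K
  have hζm : ζ ^ m = 1 := hζ.pow_eq_one
  have hζ1 : ζ ≠ 1 := hζ.ne_one hm1
  have hζn : ζ ^ n = 1 := by
    obtain ⟨t, ht⟩ := hmn
    rw [ht, pow_mul, hζm, one_pow]
  have hvaladd : ∀ a b : ZMod n, ζ ^ (a + b).val = ζ ^ a.val * ζ ^ b.val := by
    intro a b
    rw [ZMod.val_add, ← pow_val_mod ζ hζn, pow_add]
  have hprod : (∑ c ∈ Cf, ζ ^ c.val) * (∑ d ∈ D, ζ ^ d.val) = ∑ v : ZMod n, ζ ^ v.val := by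
    rw [Finset.sum_mul_sum, ← Finset.sum_product']
    refine Finset.sum_bij (fun x _ => x.1 + x.2) (fun _ _ => Finset.mem_univ _) ?_ ?_ ?_
    · intro x hx y hy hxy
      rw [Finset.mem_product] at hx hy
      obtain ⟨u, _, hu⟩ := htile (x.1 + x.2)
      have h1 := hu x ⟨hx.1, hx.2, rfl⟩
      have h2 := hu y ⟨hy.1, hy.2, hxy.symm⟩
      rw [h1, h2]
    · intro v _
      obtain ⟨x, ⟨hx1, hx2, hx3⟩, _⟩ := htile v
      exact ⟨x, Finset.mem_product.mpr ⟨hx1, hx2⟩, hx3⟩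
    · intro x _
      exact (hvaladd x.1 x.2).symm
  have hzero : (∑ c ∈ Cf, ζ ^ c.val) * (∑ d ∈ D, ζ ^ d.val) = 0 := by
    rw [hprod]
    -- sum over all of ZMod n is zero
    have key : (∑ v : ZMod n, ζ ^ v.val) * (ζ - 1) = 0 := by
      haveI : Fact (1 < n) := ⟨hn⟩
      have : (∑ v : ZMod n, ζ ^ v.val) * ζ = ∑ v : ZMod n, ζ ^ v.val := by
        rw [Finset.sum_mul]
        refine Fintype.sum_bijective (· + (1 : ZMod n)) (Equiv.addRight (1 : ZMod n)).bijective _ _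
          fun v => ?_
        rw [ZMod.val_add, ← pow_val_mod ζ hζn, ZMod.val_one, pow_succ]
      rw [mul_sub, this, mul_one, sub_self]
    exact (mul_eq_zero.mp key).resolve_right (sub_ne_zero.mpr hζ1)
  rw [← countPoly_aeval ζ hζm Cf, ← countPoly_aeval ζ hζm D] at hzero
  rcases mul_eq_zero.mp hzero with h | h
  · exact Or.inl (cyclotomic_dvd_of_aeval_zero hm0 hζ h)
  · exact Or.inr (cyclotomic_dvd_of_aeval_zero hm0 hζ h)

/-- geometric sum polynomial over ℚ -/
noncomputable def G (m : ℕ) : ℚ[X] := ∑ i ∈ Finset.range m, X ^ i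

lemma G_mul (m : ℕ) : G m * (X - 1) = X ^ m - 1 := geom_sum_mul X m

lemma X_sub_one_ne : (X - 1 : ℚ[X]) ≠ 0 := by
  have h : (X - 1 : ℚ[X]) = X - C 1 := by rw [C_1]
  rw [h]; exact X_sub_C_ne_zero 1

lemma G_eval_one (m : ℕ) : (G m).eval 1 = m := by simp [G, eval_finset_sum]

lemma G_ne_zero {m : ℕ} (hm : 0 < m) : G m ≠ 0 := by
  intro h
  have := G_eval_one m
  rw [h, eval_zero] at this
  exact_mod_cast absurd this.symm (by exact_mod_cast hm.ne')

lemma G_natDegree {m : ℕ} (hm : 0 < m) : (G m).natDegree = m - 1 := by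
  have h1 : (G m * (X - 1)).natDegree = m := by
    rw [G_mul]
    have : (X ^ m - 1 : ℚ[X]) = X ^ m - C 1 := by rw [C_1]
    rw [this, natDegree_X_pow_sub_C]
  rw [natDegree_mul (G_ne_zero hm) X_sub_one_ne] at h1
  have h2 : (X - 1 : ℚ[X]).natDegree = 1 := by
    have : (X - 1 : ℚ[X]) = X - C 1 := by rw [C_1]
    rw [this, natDegree_X_sub_C]
  omega

lemma G_coeff_zero {m : ℕ} (hm : 0 < m) : (G m).coeff 0 = 1 := by
  rw [G, finset_sum_coeff]
  rw [Finset.sum_eq_single_of_mem 0 (Finset.mem_range.mpr hm)]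
  · simp
  · intro t _ ht; rw [coeff_X_pow]; simp [Ne.symm ht]

lemma not_all_P {n p : ℕ} [NeZero n] (hp : p.Prime) (hpn : p ∣ n) (Cf : Finset (ZMod n))
    (hcard : n = Cf.card * p)
    (hall : ∀ j, 1 ≤ j → j ≤ padicValNat p n →
      cyclotomic (p ^ j) ℤ ∣ countPoly Cf (p ^ j)) :
    False := by
  haveI : Fact p.Prime := ⟨hp⟩
  have hn0 : n ≠ 0 := NeZero.ne n
  set k := padicValNat p n with hk
  have hmain : ∀ j, j ≤ k → G (p ^ j) ∣ (countPoly Cf (p ^ j)).map (algebraMap ℤ ℚ) := by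
    intro j
    induction j with
    | zero =>
      intro _
      have hG1 : G (p ^ 0) = 1 := by simp [G]
      rw [hG1]; exact one_dvd _
    | succ j ih =>
      intro hjk
      have ihd := ih (le_trans (Nat.le_succ j) hjk)
      have hdiff : (X : ℤ[X]) ^ (p ^ j) - 1 ∣
          countPoly Cf (p ^ (j + 1)) - countPoly Cf (p ^ j) := by
        rw [countPoly, countPoly, ← Finset.sum_sub_distrib]
        refine Finset.dvd_sum fun a _ => ?_
        have hmod : a.val % p ^ j = (a.val % p ^ (j + 1)) % p ^ j :=
          (Nat.mod_mod_of_dvd _ (pow_dvd_pow p (Nat.le_succ j))).symm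
        rw [hmod]
        set b := a.val % p ^ (j + 1) with hb
        have key : (X : ℤ[X]) ^ b - X ^ (b % p ^ j)
            = ((X ^ (p ^ j)) ^ (b / p ^ j) - 1) * X ^ (b % p ^ j) := by
          rw [sub_mul, one_mul, ← pow_mul, ← pow_add]
          congr 2
          exact (Nat.div_add_mod b (p ^ j)).symm ▸ rfl
        rw [key]
        exact dvd_mul_of_dvd_left
          (by simpa using sub_dvd_pow_sub_pow ((X : ℤ[X]) ^ (p ^ j)) 1 (b / p ^ j)) _
      have hdiffQ : G (p ^ j) ∣ (countPoly Cf (p ^ (j + 1))).map (algebraMap ℤ ℚ) := by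
        have h1 : G (p ^ j) ∣ (X : ℚ[X]) ^ (p ^ j) - 1 := ⟨X - 1, (G_mul _).symm⟩
        have h2 : ((X : ℤ[X]) ^ (p ^ j) - 1).map (algebraMap ℤ ℚ)
            ∣ ((countPoly Cf (p ^ (j + 1)) - countPoly Cf (p ^ j)).map (algebraMap ℤ ℚ)) := by
          obtain ⟨h, hh⟩ := hdiff
          exact ⟨h.map _, by rw [hh, Polynomial.map_mul]⟩
        have h2' : ((X : ℤ[X]) ^ (p ^ j) - 1).map (algebraMap ℤ ℚ)
            = (X : ℚ[X]) ^ (p ^ j) - 1 := by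
          simp [Polynomial.map_sub, Polynomial.map_pow]
        rw [h2', Polynomial.map_sub] at h2
        have h3 := dvd_trans h1 h2
        have := dvd_add h3 ihd
        simpa using this
      have hcyc : cyclotomic (p ^ (j + 1)) ℚ ∣ (countPoly Cf (p ^ (j + 1))).map (algebraMap ℤ ℚ) := by
        have hd := hall (j + 1) (Nat.succ_le_succ (Nat.zero_le j)) hjk
        have := Polynomial.map_dvd (algebraMap ℤ ℚ) hd
        rwa [algebraMap_int_eq, map_cyclotomic_int] at this
      have hGne := G_ne_zero (pow_pos hp.pos j)
      have hirr : Irreducible (cyclotomic (p ^ (j + 1)) ℚ) :=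
        cyclotomic.irreducible_rat (pow_pos hp.pos _)
      have hnotdvd : ¬ cyclotomic (p ^ (j + 1)) ℚ ∣ G (p ^ j) := by
        intro hdvd
        have h1 := Polynomial.natDegree_le_of_dvd hdvd hGne
        rw [natDegree_cyclotomic, Nat.totient_prime_pow hp (Nat.succ_pos j),
          G_natDegree (pow_pos hp.pos j)] at h1
        norm_num at h1
        have hpj := pow_pos hp.pos j
        have h2 := hp.two_le
        have h3 : p ^ j * 1 ≤ p ^ j * (p - 1) := Nat.mul_le_mul_left _ (by omega)
        omega
      have hcop : IsCoprime (cyclotomic (p ^ (j + 1)) ℚ) (G (p ^ j)) :=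
        (hirr.coprime_iff_not_dvd).mpr hnotdvd
      have hmul := hcop.mul_dvd hcyc hdiffQ
      have hid : G (p ^ (j + 1)) = cyclotomic (p ^ (j + 1)) ℚ * G (p ^ j) := by
        apply mul_right_cancel₀ X_sub_one_ne
        rw [G_mul, mul_assoc, G_mul, cyclotomic_prime_pow_eq_geom_sum hp, geom_sum_mul,
          ← pow_mul, ← pow_succ]
      rw [hid]
      exact hmul
  -- conclude
  have hk1 : 1 ≤ k := one_le_padicValNat_of_dvd hn0 hpn
  have hdvdk := hmain k le_rfl
  set F := (countPoly Cf (p ^ k)).map (algebraMap ℤ ℚ) with hF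
  have hCfpos : 0 < Cf.card := by
    rcases Nat.eq_zero_or_pos Cf.card with h | h
    · rw [h, zero_mul] at hcard; exact absurd hcard hn0
    · exact h
  have hFeval : F.eval 1 = (Cf.card : ℚ) := by
    rw [hF, eval_one_map]
    rw [countPoly_eval_one]
    simp
  have hFne : F ≠ 0 := by
    intro h
    rw [h, eval_zero] at hFeval
    exact_mod_cast absurd hFeval.symm (by exact_mod_cast hCfpos.ne')
  obtain ⟨q, hq⟩ := hdvdk
  have hpk : 0 < p ^ k := pow_pos hp.pos k
  have hndF : F.natDegree < p ^ k := by
    refine lt_of_le_of_lt natDegree_map_le ?_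
    by_cases h : countPoly Cf (p ^ k) = 0
    · rw [h, natDegree_zero]; exact hpk
    · rw [natDegree_lt_iff_degree_lt h]
      exact_mod_cast countPoly_degree_lt Cf hpk
  have hqne : q ≠ 0 := by rintro rfl; rw [mul_zero] at hq; exact hFne hq
  have hndq : q.natDegree = 0 := by
    have := hndF
    rw [hq, natDegree_mul (G_ne_zero hpk) hqne, G_natDegree hpk] at this
    omega
  obtain ⟨c, rfl⟩ : ∃ c, q = C c := ⟨q.coeff 0, eq_C_of_natDegree_eq_zero hndq⟩
  have hc : c = ((countPoly Cf (p ^ k)).coeff 0 : ℚ) := by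
    have h1 : F.coeff 0 = (G (p ^ k)).coeff 0 * c := by rw [hq, coeff_mul_C]
    rw [G_coeff_zero hpk, one_mul] at h1
    rw [← h1, hF, coeff_map]
    simp
  have heval : (Cf.card : ℚ) = (p ^ k : ℚ) * c := by
    rw [← hFeval, hq, eval_mul, G_eval_one, eval_C]
    push_cast
    ring
  set z : ℤ := (countPoly Cf (p ^ k)).coeff 0 with hz
  have hzq : (Cf.card : ℚ) = ((p ^ k * z : ℤ) : ℚ) := by
    rw [heval, hc]
    push_cast
    ring
  have hzint : (Cf.card : ℤ) = p ^ k * z := by exact_mod_cast hzq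
  have hdvd1 : (p : ℤ) ^ k ∣ (Cf.card : ℤ) := ⟨z, hzint⟩
  have hdvd2 : p ^ k ∣ Cf.card := by exact_mod_cast hdvd1
  have hdvd3 : p ^ (k + 1) ∣ n := by
    rw [hcard, pow_succ]
    exact mul_dvd_mul hdvd2 dvd_rfl
  exact pow_succ_padicValNat_not_dvd hn0 hdvd3

lemma forward_core {n p : ℕ} [NeZero n] (hn : 1 < n) (hp : p.Prime)
    (D : Finset (ZMod n)) (hD0 : (0 : ZMod n) ∈ D) (hDcard : D.card = p)
    (Cf : Finset (ZMod n))
    (htile : ∀ v : ZMod n, ∃! x : ZMod n × ZMod n, x.1 ∈ Cf ∧ x.2 ∈ D ∧ x.1 + x.2 = v) :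
    p ∣ n ∧ ((∀ b ∈ D, p ∣ b.val) ∨
      ∀ i : ℕ, (D.filter (fun b => b.val % p = i)).card ≤ 1) := by
  classical
  haveI : Fact p.Prime := ⟨hp⟩
  have hcount : n = Cf.card * p := by
    have h1 : (Cf ×ˢ D).card = (Finset.univ : Finset (ZMod n)).card := by
      refine Finset.card_bij (fun x _ => x.1 + x.2) (fun _ _ => Finset.mem_univ _) ?_ ?_
      · intro x hx y hy hxy
        rw [Finset.mem_product] at hx hy
        obtain ⟨u, _, hu⟩ := htile (x.1 + x.2)
        have e1 := hu x ⟨hx.1, hx.2, rfl⟩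
        have e2 := hu y ⟨hy.1, hy.2, hxy.symm⟩
        rw [e1, e2]
      · intro v _
        obtain ⟨x, ⟨hx1, hx2, hx3⟩, _⟩ := htile v
        exact ⟨x, Finset.mem_product.mpr ⟨hx1, hx2⟩, hx3⟩
    rw [Finset.card_product, hDcard, Finset.card_univ, ZMod.card] at h1
    exact h1.symm
  have hpn : p ∣ n := hcount ▸ dvd_mul_left p Cf.card
  refine ⟨hpn, ?_⟩
  set k := padicValNat p n with hk
  by_cases hQ : ∃ j, 1 ≤ j ∧ j ≤ k ∧ cyclotomic (p ^ j) ℤ ∣ countPoly D (p ^ j)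
  · obtain ⟨j, hj1, hjk, hdvd⟩ := hQ
    obtain ⟨s, rfl⟩ : ∃ s, j = s + 1 := ⟨j - 1, by omega⟩
    have hcoeff0 : 1 ≤ (countPoly D (p ^ (s + 1))).coeff 0 := by
      rw [countPoly_coeff]
      have : (0 : ZMod n) ∈ D.filter (fun a => a.val % p ^ (s + 1) = 0) := by
        rw [Finset.mem_filter]
        exact ⟨hD0, by simp [ZMod.val_zero]⟩
      have := Finset.card_pos.mpr ⟨_, this⟩
      exact_mod_cast this
    have heq := eq_cyclotomic_of_dvd p hp s (countPoly D (p ^ (s + 1)))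
      (countPoly_coeff_nonneg D _) (countPoly_degree_lt D (pow_pos hp.pos _))
      (by rw [countPoly_eval_one, hDcard]) hcoeff0 hdvd
    rcases Nat.eq_zero_or_pos s with rfl | hs
    · right
      intro i
      have h2 : ((D.filter (fun b => b.val % p ^ (0 + 1) = i)).card : ℤ)
          = if p ^ 0 ∣ i ∧ i < p ^ (0 + 1) then 1 else 0 := by
        rw [← countPoly_coeff, heq, cyclotomic_prime_pow_coeff p hp]
      have h3 : (D.filter (fun b => b.val % p = i)) = (D.filter (fun b => b.val % p ^ (0+1) = i)) := by
        simp [pow_one]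
      rw [h3]
      split at h2
      · exact_mod_cast h2.le
      · have : (D.filter (fun b => b.val % p ^ (0+1) = i)).card = 0 := by exact_mod_cast h2
        omega
    · left
      intro b hb
      have hmem : (1 : ℤ) ≤ ((D.filter
          (fun x => x.val % p ^ (s + 1) = b.val % p ^ (s + 1))).card : ℤ) := by
        have : b ∈ D.filter (fun x => x.val % p ^ (s + 1) = b.val % p ^ (s + 1)) := by
          rw [Finset.mem_filter]; exact ⟨hb, rfl⟩
        exact_mod_cast Finset.card_pos.mpr ⟨_, this⟩
      rw [← countPoly_coeff, heq, cyclotomic_prime_pow_coeff p hp] at hmem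
      have hcond : p ^ s ∣ b.val % p ^ (s + 1) := by
        by_contra hc
        have : ¬ (p ^ s ∣ b.val % p ^ (s+1) ∧ b.val % p ^ (s+1) < p ^ (s + 1)) := fun h => hc h.1
        rw [if_neg this] at hmem
        norm_num at hmem
      have hps : p ∣ p ^ s := dvd_pow_self p hs.ne'
      have h1 : p ∣ b.val % p ^ (s + 1) := dvd_trans hps hcond
      have h2 : p ∣ p ^ (s + 1) * (b.val / p ^ (s + 1)) :=
        Dvd.dvd.mul_right (dvd_pow_self p (Nat.succ_ne_zero s)) _
      have h3 : p ∣ p ^ (s + 1) * (b.val / p ^ (s + 1)) + b.val % p ^ (s + 1) :=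
        Nat.dvd_add h2 h1
      rwa [Nat.div_add_mod] at h3
  · push_neg at hQ
    have hall : ∀ j, 1 ≤ j → j ≤ k → cyclotomic (p ^ j) ℤ ∣ countPoly Cf (p ^ j) := by
      intro j h1 h2
      exact (dichotomy hn hp h1 (dvd_trans (pow_dvd_pow p h2) pow_padicValNat_dvd) Cf D htile).resolve_right
        (hQ j h1 h2)
    exact absurd (not_all_P hp hpn Cf hcount hall) not_false

variable {n : ℕ} {S : Finset (ZMod n)}

lemma circulant_adj (hSneg : ∀ s ∈ S, -s ∈ S) {u v : ZMod n} :
    (circulantGraph n S).Adj u v ↔ u ≠ v ∧ v - u ∈ S := by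
  simp only [circulantGraph, SimpleGraph.fromRel_adj]
  constructor
  · rintro ⟨hne, h | h⟩
    · exact ⟨hne, h⟩
    · refine ⟨hne, ?_⟩
      have := hSneg _ h
      rwa [neg_sub] at this
  · rintro ⟨hne, h⟩
    exact ⟨hne, Or.inl h⟩

lemma mem_closure_of_connected (hSneg : ∀ s ∈ S, -s ∈ S)
    (hconn : (circulantGraph n S).Connected) (v : ZMod n) :
    v ∈ AddSubgroup.closure (S : Set (ZMod n)) := by
  have key : ∀ u w : ZMod n, (circulantGraph n S).Walk u w →
      u ∈ AddSubgroup.closure (S : Set (ZMod n)) →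
      w ∈ AddSubgroup.closure (S : Set (ZMod n)) := by
    intro u w walk
    induction walk with
    | nil => exact id
    | @cons a b c h w ih =>
      intro ha
      refine ih ?_
      rcases (circulant_adj hSneg).mp h with ⟨_, hs⟩
      have hb : b = a + (b - a) := by ring
      rw [hb]
      exact AddSubgroup.add_mem _ ha (AddSubgroup.subset_closure hs)
  obtain ⟨w⟩ := hconn.preconnected 0 v
  exact key 0 v w (AddSubgroup.zero_mem _)

/-- tiling property from a perfect code -/
lemma tile_of_perfectCode (hSneg : ∀ s ∈ S, -s ∈ S) {C : Set (ZMod n)}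
    (hPC : IsPerfectCode (circulantGraph n S) C) (v : ZMod n) :
    ∃! c, c ∈ C ∧ v - c ∈ insert (0 : ZMod n) S := by
  obtain ⟨hind, hcov⟩ := hPC
  by_cases hv : v ∈ C
  · refine ⟨v, ⟨hv, by simp⟩, ?_⟩
    rintro c' ⟨hc', hd'⟩
    by_contra hne
    have hvc : v - c' ∈ S := by
      rcases Finset.mem_insert.mp hd' with h | h
      · exact absurd (sub_eq_zero.mp h).symm hne
      · exact h
    exact hind c' hc' v hv ((circulant_adj hSneg).mpr ⟨hne, hvc⟩)
  · obtain ⟨c, ⟨hcC, hadj⟩, huniq⟩ := hcov v hv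
    rw [circulant_adj hSneg] at hadj
    obtain ⟨hne, hcv⟩ := hadj
    have hvc : v - c ∈ S := by
      have := hSneg _ hcv
      rwa [neg_sub] at this
    refine ⟨c, ⟨hcC, Finset.mem_insert_of_mem hvc⟩, ?_⟩
    rintro c' ⟨hc'C, hd'⟩
    have hvc' : v - c' ∈ S := by
      rcases Finset.mem_insert.mp hd' with h | h
      · obtain rfl : v = c' := sub_eq_zero.mp h
        exact absurd hc'C hv
      · exact h
    refine huniq c' ⟨hc'C, (circulant_adj hSneg).mpr ⟨?_, ?_⟩⟩
    · rintro rfl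
      exact hv hc'C
    · have := hSneg _ hvc'
      rwa [neg_sub] at this

/-- perfect code from a tiling -/
lemma perfectCode_of_tile (hSneg : ∀ s ∈ S, -s ∈ S) {C : Set (ZMod n)}
    (htile : ∀ v : ZMod n, ∃! c, c ∈ C ∧ v - c ∈ insert (0 : ZMod n) S) :
    IsPerfectCode (circulantGraph n S) C := by
  constructor
  · intro u hu v hv hadj
    rw [circulant_adj hSneg] at hadj
    obtain ⟨hne, hs⟩ := hadj
    obtain ⟨c, _, huniq⟩ := htile v
    have e1 : v = c := huniq v ⟨hv, by simp⟩
    have e2 : u = c := huniq u ⟨hu, Finset.mem_insert_of_mem hs⟩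
    exact hne (e2.trans e1.symm)
  · intro v hv
    obtain ⟨c, ⟨hcC, hd⟩, huniq⟩ := htile v
    have hvc : v - c ∈ S := by
      rcases Finset.mem_insert.mp hd with h | h
      · obtain rfl : v = c := sub_eq_zero.mp h
        exact absurd hcC hv
      · exact h
    refine ⟨c, ⟨hcC, (circulant_adj hSneg).mpr ⟨?_, ?_⟩⟩, ?_⟩
    · rintro rfl
      exact hv hcC
    · have := hSneg _ hvc
      rwa [neg_sub] at this
    · rintro c' ⟨hc'C, hadj'⟩
      rw [circulant_adj hSneg] at hadj'
      obtain ⟨hne', hs'⟩ := hadj'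
      have : v - c' ∈ S := by
        have := hSneg _ hs'
        rwa [neg_sub] at this
      exact huniq c' ⟨hc'C, Finset.mem_insert_of_mem this⟩

end CircPC

/-- **Theorem 1.1.** Let `n` be a positive integer and `p` an odd prime. A connected circulant
graph `Cay(Z_n, S)` of degree `p - 1` admits a perfect code iff `p ∣ n` and `s ≢ s' (mod p)`
for distinct `s, s' ∈ S ∪ {0}`. -/
theorem circulant_perfectCode_iff_of_degree_pred_prime
    (n : ℕ) (hn : 0 < n) (p : ℕ) (hp : p.Prime) (hodd : Odd p)
    (S : Finset (ZMod n)) (h0S : (0 : ZMod n) ∉ S) (hSneg : ∀ s ∈ S, -s ∈ S)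
    (hcard : S.card = p - 1) (hconn : (circulantGraph n S).Connected) :
    (∃ C : Set (ZMod n), IsPerfectCode (circulantGraph n S) C) ↔
      (p ∣ n ∧ ∀ s ∈ insert (0 : ZMod n) S, ∀ s' ∈ insert (0 : ZMod n) S,
        s ≠ s' → ¬ (s.val ≡ s'.val [MOD p])) := by
  classical
  haveI : NeZero n := ⟨hn.ne'⟩
  haveI : Fact p.Prime := ⟨hp⟩
  haveI : NeZero p := ⟨hp.ne_zero⟩
  have hp3 : 3 ≤ p := by
    have h2 : p ≠ 2 := by
      rintro rfl
      exact (by decide : ¬ Odd 2) hodd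
    have := hp.two_le
    omega
  have hSsub : S ⊆ Finset.univ.erase 0 := fun s hs =>
    Finset.mem_erase.mpr ⟨fun h => h0S (h ▸ hs), Finset.mem_univ _⟩
  have hple : p - 1 ≤ n - 1 := by
    have h := Finset.card_le_card hSsub
    rwa [Finset.card_erase_of_mem (Finset.mem_univ _), Finset.card_univ, ZMod.card, hcard] at h
  have hn1 : 1 < n := by omega
  haveI : Fact (1 < n) := ⟨hn1⟩
  set D := insert (0 : ZMod n) S with hD
  have hDcard : D.card = p := by
    rw [hD, Finset.card_insert_of_notMem h0S, hcard]
    omega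
  have hD0 : (0 : ZMod n) ∈ D := Finset.mem_insert_self _ _
  constructor
  · rintro ⟨C, hPC⟩
    have htile' := CircPC.tile_of_perfectCode hSneg hPC
    set Cf := C.toFinite.toFinset with hCf
    have hmemCf : ∀ x, x ∈ Cf ↔ x ∈ C := fun x => Set.Finite.mem_toFinset _
    have htile : ∀ v : ZMod n, ∃! x : ZMod n × ZMod n, x.1 ∈ Cf ∧ x.2 ∈ D ∧ x.1 + x.2 = v := by
      intro v
      obtain ⟨c, ⟨hcC, hd⟩, huniq⟩ := htile' v
      refine ⟨(c, v - c), ⟨(hmemCf c).mpr hcC, hd, by ring⟩, ?_⟩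
      rintro ⟨c', d'⟩ ⟨h1, h2, h3⟩
      have hd2 : d' = v - c' := by rw [← h3]; ring
      have hc' : c' = c := huniq c' ⟨(hmemCf c').mp h1, by rw [← hd2]; exact h2⟩
      exact Prod.ext hc' (by rw [hd2, hc'])
    obtain ⟨hpn, hdisj⟩ := CircPC.forward_core hn1 hp D hD0 hDcard Cf htile
    refine ⟨hpn, ?_⟩
    rcases hdisj with hleft | hright
    · exfalso
      have h1cl := CircPC.mem_closure_of_connected hSneg hconn 1
      have hdvd1 : ∀ x ∈ AddSubgroup.closure (S : Set (ZMod n)), p ∣ x.val := by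
        intro x hx
        induction hx using AddSubgroup.closure_induction with
        | mem s hs => exact hleft s (Finset.mem_insert_of_mem hs)
        | zero => rw [ZMod.val_zero]; exact dvd_zero p
        | add x y hx hy ihx ihy =>
          rw [ZMod.val_add]
          exact (Nat.dvd_mod_iff hpn).mpr (Nat.dvd_add ihx ihy)
        | neg x hx ihx =>
          have hsum : (x + -x).val = 0 := by rw [add_neg_cancel, ZMod.val_zero]
          rw [ZMod.val_add] at hsum
          have hnd : n ∣ x.val + (-x).val := Nat.dvd_of_mod_eq_zero hsum
          have hpd : p ∣ x.val + (-x).val := dvd_trans hpn hnd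
          exact (Nat.dvd_add_right ihx).mp hpd
      have h1 := hdvd1 1 h1cl
      rw [ZMod.val_one] at h1
      have := Nat.le_of_dvd one_pos h1
      omega
    · intro s hs s' hs' hne hmod
      have h2 : 1 < (D.filter (fun b => b.val % p = s'.val % p)).card :=
        Finset.one_lt_card.mpr
          ⟨s, Finset.mem_filter.mpr ⟨hs, hmod⟩, s', Finset.mem_filter.mpr ⟨hs', rfl⟩, hne⟩
      have h3 := hright (s'.val % p)
      omega
  · rintro ⟨hpn, hdist⟩
    set φ := ZMod.castHom hpn (ZMod p) with hφ
    have hφval : ∀ x : ZMod n, φ x = (x.val : ZMod p) := fun x => by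
      rw [hφ, ZMod.castHom_apply, ← ZMod.natCast_val]
    have hinj : ∀ s ∈ D, ∀ s' ∈ D, φ s = φ s' → s = s' := by
      intro s hs s' hs' heq
      by_contra hne
      refine hdist s hs s' hs' hne ?_
      rw [hφval, hφval] at heq
      exact (ZMod.natCast_eq_natCast_iff _ _ _).mp heq
    have himg : D.image φ = Finset.univ := by
      apply Finset.eq_univ_of_card
      rw [Finset.card_image_of_injOn (fun s hs s' hs' => hinj s hs s' hs'), hDcard, ZMod.card]
    refine ⟨{x | φ x = 0}, CircPC.perfectCode_of_tile hSneg ?_⟩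
    intro v
    have hvmem : φ v ∈ D.image φ := by rw [himg]; exact Finset.mem_univ _
    obtain ⟨d, hd, hφd⟩ := Finset.mem_image.mp hvmem
    refine ⟨v - d, ⟨?_, ?_⟩, ?_⟩
    · show φ (v - d) = 0
      rw [map_sub, hφd, sub_self]
    · rw [sub_sub_cancel]; exact hd
    · rintro c' ⟨hc', hd'⟩
      have hc'0 : φ c' = 0 := hc'
      have heq : φ (v - c') = φ d := by rw [map_sub, hc'0, sub_zero, hφd]
      have he : v - c' = d := hinj _ hd' _ hd heq
      have : c' = v - d := by rw [← he]; ring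
      rw [this]
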